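/- Let G be an ancestral graph on vertex set [p] and 𝓘 a multiset of intervention targets that does not doubly-intervene on any selection adjacent node of G. If i ∈ W_𝓘 and j ∈ [p] are not adjacent in the interventional graph G^𝓘, then i and j are not adjacent in the unique maximal extension \bar{G^𝓘} of G^𝓘. In particular, i is m-separated from j given (ant(j) ∪ W_𝓘) \ {i,j} in G^𝓘, where ant(j) denotes the set of nodes anterior to j. -/

import Mathlib

/-
Common formalization infrastructure for loopless mixed graphs (LMGs),
m-separation, Markov equivalence, interventional graphs, ribbons,
ancestral graphs, colliders with order, and the head/tail factorization
machinery of acyclic directed mixed graphs (ADMGs), following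
"Distributional Invariances and Interventional Markov Equivalence
for Mixed Graph Models" (Solus).
-/

open Relation

/-- An endpoint mark of an edge in a mixed graph: either a tail or an arrowhead. -/
inductive Mark : Type
  | tail : Mark
  | arrow : Mark
  deriving DecidableEq

/-- A mixed graph on a vertex type `V`: `edge a b m₁ m₂` means there is an edge
between `a` and `b` carrying mark `m₁` at `a` and mark `m₂` at `b`.
Undirected edges are `(tail, tail)`, directed `a → b` is `(tail, arrow)`,
and bidirected is `(arrow, arrow)`. -/
structure MixedGraph (V : Type) : Type where
  edge : V → V → Mark → Mark → Prop

namespace MixedGraph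

variable {V : Type}

/-- A loopless mixed graph: edges are symmetric (with endpoint marks swapped) and no loops. -/
def IsLMG (G : MixedGraph V) : Prop :=
  (∀ a b m₁ m₂, G.edge a b m₁ m₂ → G.edge b a m₂ m₁) ∧ ∀ a m₁ m₂, ¬ G.edge a a m₁ m₂

/-- Two vertices are adjacent if there is some edge between them. -/
def adj (G : MixedGraph V) (a b : V) : Prop := ∃ m₁ m₂, G.edge a b m₁ m₂

/-- A simple mixed graph: at most one edge between any two nodes. -/
def Simple (G : MixedGraph V) : Prop :=
  ∀ a b m₁ m₂ n₁ n₂, G.edge a b m₁ m₂ → G.edge a b n₁ n₂ → m₁ = n₁ ∧ m₂ = n₂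

/-- A directed edge `a → b`. -/
def dirEdge (G : MixedGraph V) (a b : V) : Prop := G.edge a b Mark.tail Mark.arrow

/-- A bidirected edge `a ↔ b`. -/
def bidirEdge (G : MixedGraph V) (a b : V) : Prop := G.edge a b Mark.arrow Mark.arrow

/-- An undirected edge `a − b`. -/
def undirEdge (G : MixedGraph V) (a b : V) : Prop := G.edge a b Mark.tail Mark.tail

/-- `a` is an ancestor of `b` (reflexively: there is a directed path, possibly trivial). -/
def ancestor (G : MixedGraph V) (a b : V) : Prop := ReflTransGen G.dirEdge a b

/-- A node is selection adjacent when it is an endpoint of an undirected edge. -/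
def selectionAdjacent (G : MixedGraph V) (a : V) : Prop := ∃ b, G.undirEdge a b ∨ G.undirEdge b a

/-- An ancestral graph: an LMG with no directed cycles, no bidirected edge with a
(nontrivial) directed path between its endpoints, and no arrowhead pointing into a
selection adjacent node. -/
def IsAncestral (G : MixedGraph V) : Prop :=
  G.IsLMG ∧ (∀ a, ¬ TransGen G.dirEdge a a) ∧
    (∀ a b, G.bidirEdge a b → ¬ TransGen G.dirEdge a b ∧ ¬ TransGen G.dirEdge b a) ∧
    ∀ a, G.selectionAdjacent a → ∀ b m, ¬ G.edge b a m Mark.arrow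

/-- An acyclic directed mixed graph: only directed and bidirected edges, no directed cycles. -/
def IsADMG (G : MixedGraph V) : Prop :=
  G.IsLMG ∧ (∀ a b m₁ m₂, G.edge a b m₁ m₂ → ¬ (m₁ = Mark.tail ∧ m₂ = Mark.tail)) ∧
    ∀ a, ¬ TransGen G.dirEdge a a

/-- A directed acyclic graph: only directed edges, and no directed cycles. -/
def IsDAG (G : MixedGraph V) : Prop :=
  G.IsLMG ∧
    (∀ a b m₁ m₂, G.edge a b m₁ m₂ →
      (m₁ = Mark.tail ∧ m₂ = Mark.arrow) ∨ (m₁ = Mark.arrow ∧ m₂ = Mark.tail)) ∧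
    ∀ a, ¬ TransGen G.dirEdge a a

/-- A directed ancestral graph: an ancestral graph with no undirected edges. -/
def IsDirectedAncestral (G : MixedGraph V) : Prop := G.IsAncestral ∧ ∀ a b, ¬ G.undirEdge a b

/-- A walk in a mixed graph `G`, recording at each step the pair of endpoint marks used. -/
structure MWalk (G : MixedGraph V) : Type where
  len : ℕ
  vtx : ℕ → V
  mk₁ : ℕ → Mark
  mk₂ : ℕ → Mark
  isEdge : ∀ i, i < len → G.edge (vtx i) (vtx (i + 1)) (mk₁ i) (mk₂ i)

namespace MWalk

variable {G : MixedGraph V}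

/-- The interior vertex at position `i` is a collider on the walk. -/
def colliderAt (w : MWalk G) (i : ℕ) : Prop :=
  0 < i ∧ i < w.len ∧ w.mk₂ (i - 1) = Mark.arrow ∧ w.mk₁ i = Mark.arrow

/-- The walk is a path: all of its vertices are pairwise distinct. -/
def IsPath (w : MWalk G) : Prop :=
  ∀ i j, i ≤ w.len → j ≤ w.len → w.vtx i = w.vtx j → i = j

/-- The walk is m-connecting given `C`: all colliders are in `C` or ancestors of `C`,
all non-collider vertices are outside of `C`. -/
def mConnecting (w : MWalk G) (C : Set V) : Prop :=
  (∀ i, w.colliderAt i → ∃ c ∈ C, G.ancestor (w.vtx i) c) ∧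
    ∀ i, i ≤ w.len → ¬ w.colliderAt i → w.vtx i ∉ C

end MWalk

/-- There is an m-connecting path between `a` and `b` given `C`. -/
def mConnected (G : MixedGraph V) (a b : V) (C : Set V) : Prop :=
  ∃ w : MWalk G, w.IsPath ∧ w.vtx 0 = a ∧ w.vtx w.len = b ∧ w.mConnecting C

/-- `C` m-separates `A` and `B` in `G`. -/
def mSep (G : MixedGraph V) (A B C : Set V) : Prop := ∀ a ∈ A, ∀ b ∈ B, ¬ G.mConnected a b C

/-- The (formal) independence model `J(G)`: triples `⟨A,B∣C⟩` with `A,B` disjoint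
and m-separated given `C`. -/
def indep (G : MixedGraph V) (A B C : Set V) : Prop := Disjoint A B ∧ G.mSep A B C

/-- Markov equivalence: equal independence models. -/
def MarkovEquiv (G H : MixedGraph V) : Prop := ∀ A B C : Set V, G.indep A B C ↔ H.indep A B C

/-- The result of adding a single edge (with marks `m₁, m₂`) between `a` and `b`. -/
def addEdge (G : MixedGraph V) (a b : V) (m₁ m₂ : Mark) : MixedGraph V where
  edge x y n₁ n₂ := G.edge x y n₁ n₂ ∨ (x = a ∧ y = b ∧ n₁ = m₁ ∧ n₂ = m₂) ∨
    (x = b ∧ y = a ∧ n₁ = m₂ ∧ n₂ = m₁)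

/-- A mixed graph is maximal if adding any edge between nonadjacent vertices changes
its independence model. -/
def IsMaximal (G : MixedGraph V) : Prop :=
  ∀ a b, a ≠ b → ¬ G.adj a b → ∀ m₁ m₂, ¬ MarkovEquiv (G.addEdge a b m₁ m₂) G

/-- `G` is an (edge-)subgraph of `K` on the same vertex set. -/
def Subgraph (G K : MixedGraph V) : Prop := ∀ a b m₁ m₂, G.edge a b m₁ m₂ → K.edge a b m₁ m₂

/-- `K` is the maximal ancestral graph extension of the ancestral graph `G`:
a Markov equivalent maximal ancestral supergraph. -/
def IsMAGExtension (G K : MixedGraph V) : Prop :=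
  Subgraph G K ∧ K.IsAncestral ∧ MarkovEquiv G K ∧ K.IsMaximal

/-- `G` contains a ribbon: a collider path `⟨i,j,k⟩` with no endpoint-identical edge
between `i` and `k` such that `j` or a descendant of `j` is selection adjacent
or lies on a directed cycle. -/
def hasRibbon (G : MixedGraph V) : Prop :=
  ∃ i j k m₁ m₂, i ≠ k ∧ G.edge i j m₁ Mark.arrow ∧ G.edge j k Mark.arrow m₂ ∧
    ¬ G.edge i k m₁ m₂ ∧ ∃ d, G.ancestor j d ∧ (G.selectionAdjacent d ∨ TransGen G.dirEdge d d)

/-- Ribbonless graph. -/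
def Ribbonless (G : MixedGraph V) : Prop := ¬ G.hasRibbon

/-- `K` is the maximal ribbonless extension of the ribbonless graph `G`. -/
def IsRGExtension (G K : MixedGraph V) : Prop :=
  Subgraph G K ∧ K.Ribbonless ∧ MarkovEquiv G K ∧ K.IsMaximal

/-- `⟨i,j,k⟩` is a collider path (both edges have an arrowhead at `j`). -/
def isCollider (G : MixedGraph V) (i j k : V) : Prop :=
  ∃ m₁ m₂, G.edge i j m₁ Mark.arrow ∧ G.edge j k Mark.arrow m₂

/-- A v-structure: a collider whose endpoints are nonadjacent. -/
def isVStructure (G : MixedGraph V) (i j k : V) : Prop := G.isCollider i j k ∧ ¬ G.adj i k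

/-- There is a discriminating path `⟨w 0, …, w m, w (m+1), w (m+2)⟩ = ⟨v₀,…,v_m,b,c⟩`
for the triple `⟨i,j,k⟩`, all of whose intermediate triples satisfy `P`:
`v₀` and `c` are nonadjacent, `v₁,…,v_m` are parents of `c`, and the triples
`⟨v₀,v₁,v₂⟩, …, ⟨v_{m-1},v_m,b⟩` satisfy `P`. -/
def discPathFor (G : MixedGraph V) (P : V → V → V → Prop) (i j k : V) : Prop :=
  ∃ (m : ℕ) (w : ℕ → V), 1 ≤ m ∧
    ((w m = i ∧ w (m + 1) = j ∧ w (m + 2) = k) ∨ (w m = k ∧ w (m + 1) = j ∧ w (m + 2) = i)) ∧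
    ¬ G.adj (w 0) (w (m + 2)) ∧
    (∀ l, 1 ≤ l → l ≤ m → G.dirEdge (w l) (w (m + 2))) ∧
    (∀ l l', l ≤ m + 2 → l' ≤ m + 2 → w l = w l' → l = l') ∧
    ∀ l, l + 2 ≤ m + 1 → P (w l) (w (l + 1)) (w (l + 2))

/-- `⟨i,j,k⟩` is a collider with order at most `t`. Order `0` colliders are
v-structures; a collider has order at most `t+1` if it has order at most `t` or
lies at the end of a discriminating path all of whose intermediate triples are
colliders of order at most `t`. -/
def colliderOrderLE (G : MixedGraph V) : ℕ → V → V → V → Prop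
  | 0, i, j, k => G.isCollider i j k ∧ ¬ G.adj i k
  | t + 1, i, j, k =>
      colliderOrderLE G t i j k ∨
        (G.isCollider i j k ∧ G.discPathFor (colliderOrderLE G t) i j k)

/-- `⟨i,j,k⟩` is a collider with order (for some order). -/
def hasColliderWithOrder (G : MixedGraph V) (i j k : V) : Prop := ∃ t, G.colliderOrderLE t i j k

/-- `⟨i,j,k⟩` is a collider with order exactly `t`. -/
def colliderOrderEq (G : MixedGraph V) (t : ℕ) (i j k : V) : Prop :=
  G.colliderOrderLE t i j k ∧ ∀ s < t, ¬ G.colliderOrderLE s i j k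

/-- `a` is anterior to `b`: there is a path from `a` to `b` consisting of undirected
edges followed by a directed path toward `b`. -/
def anteriorTo (G : MixedGraph V) (a b : V) : Prop :=
  ∃ c, ReflTransGen G.undirEdge a c ∧ ReflTransGen G.dirEdge c b

/-- The closure of the set of selection adjacent nodes under the operation of
consecutively removing arrowheads pointing into such nodes (`i → j − k` becomes
`i − j − k`, creating the new selection adjacent node `i`). -/
inductive selClosure (G : MixedGraph V) : V → Prop
  | base (a b : V) : G.undirEdge a b → selClosure G a
  | base' (a b : V) : G.undirEdge b a → selClosure G a
  | step (a b : V) : G.dirEdge a b → selClosure G b → selClosure G a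

/-- The anterior graph `G*` of `G`: consecutively remove all arrowheads pointing into
nodes adjacent to an undirected edge. -/
def anteriorGraph (G : MixedGraph V) : MixedGraph V where
  edge a b m₁ m₂ := ∃ n₁ n₂, G.edge a b n₁ n₂ ∧
    ((selClosure G a ∧ m₁ = Mark.tail) ∨ (¬ selClosure G a ∧ m₁ = n₁)) ∧
    ((selClosure G b ∧ m₂ = Mark.tail) ∨ (¬ selClosure G b ∧ m₂ = n₂))

/-- The set of parents of `i`. -/
def parentsSet (G : MixedGraph V) (i : V) : Set V := {a | G.dirEdge a i}

/-- The set of spouses of `i`. -/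
def spousesSet (G : MixedGraph V) (i : V) : Set V := {a | G.bidirEdge i a}

/-- The set of ancestors of a set `S` (including `S` itself). -/
def ancSet (G : MixedGraph V) (S : Set V) : Set V := {a | ∃ s ∈ S, G.ancestor a s}

/-- A set is ancestrally closed when it equals its set of ancestors. -/
def AncestrallyClosed (G : MixedGraph V) (A : Set V) : Prop := A = G.ancSet A

/-- The district of `i` in the induced subgraph on `A`: the connected component of `i`
under bidirected edges within `A`. -/
def districtIn (G : MixedGraph V) (A : Set V) (i : V) : Set V :=
  {j | j ∈ A ∧ ReflTransGen (fun x y => x ∈ A ∧ y ∈ A ∧ G.bidirEdge x y) i j}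

/-- Two vertices lie in a common district of `G`. -/
def sameDistrict (G : MixedGraph V) (a b : V) : Prop :=
  ∃ d, a ∈ G.districtIn Set.univ d ∧ b ∈ G.districtIn Set.univ d

/-- The barren subset of `A`: those `x ∈ A` with no proper descendants inside `A`. -/
def barren (G : MixedGraph V) (A : Set V) : Set V :=
  {x | x ∈ A ∧ ∀ y ∈ A, G.ancestor x y → y = x}

/-- The head-extraction step `Φ_G(A)`. -/
def headsStep (G : MixedGraph V) (A : Set V) : Set (Set V) :=
  {H | H.Nonempty ∧ H = ⋂ i ∈ H, G.barren (G.ancSet (G.districtIn A i))}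

/-- The residual step `Ψ_G(A)`. -/
def psi (G : MixedGraph V) (A : Set V) : Set V := A \ ⋃ H ∈ G.headsStep A, H

/-- The partition `[A]_G` of `A` into heads. -/
def heads (G : MixedGraph V) (A : Set V) : Set (Set V) :=
  {H | ∃ n : ℕ, H ∈ G.headsStep ((G.psi)^[n] A)}

/-- `dis_{an(H)}(H)`: the union of the districts of the elements of `H` in the induced
subgraph on the ancestors of `H`. -/
def headDistrict (G : MixedGraph V) (H : Set V) : Set V :=
  ⋃ i ∈ H, G.districtIn (G.ancSet H) i

/-- The tail of a head `H`: `(dis_{an(H)}(H) \ H) ∪ pa_G(dis_{an(H)}(H))`. -/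
def tailOf (G : MixedGraph V) (H : Set V) : Set V :=
  (G.headDistrict H \ H) ∪ {a | ∃ s ∈ G.headDistrict H, G.dirEdge a s}

end MixedGraph

/-- The index set `W_𝓘` of intervention nodes: (occurrences of) nonempty targets. -/
abbrev InterventionIndex {V ι : Type} (targets : ι → Set V) : Type :=
  {k : ι // (targets k).Nonempty}

/-- The interventional graph `G^𝓘`: add a source node `ω_I` for each nonempty target
`I ∈ 𝓘` together with the edges `ω_I → i` for all `i ∈ I`. -/
def interventionGraph {V ι : Type} (G : MixedGraph V) (targets : ι → Set V) :
    MixedGraph (V ⊕ InterventionIndex targets) where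
  edge a b m₁ m₂ :=
    match a, b with
    | Sum.inl a, Sum.inl b => G.edge a b m₁ m₂
    | Sum.inr k, Sum.inl b => b ∈ targets k.1 ∧ m₁ = Mark.tail ∧ m₂ = Mark.arrow
    | Sum.inl a, Sum.inr k => a ∈ targets k.1 ∧ m₁ = Mark.arrow ∧ m₂ = Mark.tail
    | Sum.inr _, Sum.inr _ => False

/-- The multiset of targets doubly-intervenes on `i`: two distinct elements of the
multiset both contain `i`. -/
def doublyIntervenes {V ι : Type} (targets : ι → Set V) (i : V) : Prop :=
  ∃ k k' : ι, k ≠ k' ∧ i ∈ targets k ∧ i ∈ targets k'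

/-- `𝓘`-Markov equivalence: the interventional graphs have the same independence models. -/
def IMarkovEquiv {V ι : Type} (G H : MixedGraph V) (targets : ι → Set V) : Prop :=
  MixedGraph.MarkovEquiv (interventionGraph G targets) (interventionGraph H targets)

/-- An `𝓘`-collider with order: a collider with order in `G^𝓘` that is not a collider
with order in `G`. -/
def IColliderWithOrder {V ι : Type} (G : MixedGraph V) (targets : ι → Set V)
    (i j k : V ⊕ InterventionIndex targets) : Prop :=
  (interventionGraph G targets).hasColliderWithOrder i j k ∧
    ¬ ∃ i' j' k' : V, i = Sum.inl i' ∧ j = Sum.inl j' ∧ k = Sum.inl k' ∧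
      G.hasColliderWithOrder i' j' k'

/-- An `𝓘`-v-structure: a v-structure of `G^𝓘` with an endpoint in `W_𝓘`. -/
def IVStructure {V ι : Type} (G : MixedGraph V) (targets : ι → Set V)
    (i j k : V ⊕ InterventionIndex targets) : Prop :=
  (interventionGraph G targets).isVStructure i j k ∧
    ((∃ κ, i = Sum.inr κ) ∨ (∃ κ, k = Sum.inr κ))

/-- The induced subgraph of a graph on `[p] ∪ W_𝓘` on the observed vertex set `[p]`. -/
def observedPart {V ι : Type} {targets : ι → Set V}
    (K : MixedGraph (V ⊕ InterventionIndex targets)) : MixedGraph V where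
  edge a b m₁ m₂ := K.edge (Sum.inl a) (Sum.inl b) m₁ m₂

section Stmt3Aux

variable {p : ℕ} {ι : Type} (G : MixedGraph (Fin p)) (targets : ι → Set (Fin p))

lemma gi_dir_inl {a : Fin p} {b} (h : (interventionGraph G targets).dirEdge (Sum.inl a) b) :
    ∃ b', b = Sum.inl b' ∧ G.dirEdge a b' := by
  cases b with
  | inl b' => exact ⟨b', rfl, h⟩
  | inr k => obtain ⟨-, h2, -⟩ := h; simp at h2

lemma gi_no_dir_into_inr {x} {k : InterventionIndex targets} :
    ¬ (interventionGraph G targets).dirEdge x (Sum.inr k) := by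
  intro h
  cases x with
  | inl a => obtain ⟨-, h2, -⟩ := h; simp at h2
  | inr k' => exact h

lemma gi_rtg_dir_inl : ∀ {x y}, Relation.ReflTransGen (interventionGraph G targets).dirEdge x y →
    ∀ {a : Fin p}, x = Sum.inl a → ∃ b, y = Sum.inl b ∧ Relation.ReflTransGen G.dirEdge a b := by
  intro x y h
  induction h with
  | refl => intro a hx; exact ⟨a, hx, .refl⟩
  | tail h1 h2 ih =>
    intro a hx
    obtain ⟨b, rfl, hb⟩ := ih hx
    obtain ⟨c, rfl, hc⟩ := gi_dir_inl G targets h2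
    exact ⟨c, rfl, hb.tail hc⟩

lemma gi_rtg_into_inr {x} {k : InterventionIndex targets}
    (h : Relation.ReflTransGen (interventionGraph G targets).dirEdge x (Sum.inr k)) :
    x = Sum.inr k := by
  rcases Relation.ReflTransGen.cases_tail h with heq | ⟨c, -, hc⟩
  · exact heq.symm
  · exact absurd hc (gi_no_dir_into_inr G targets)

lemma gi_undir {x y} (h : (interventionGraph G targets).undirEdge x y) :
    ∃ a b, x = Sum.inl a ∧ y = Sum.inl b ∧ G.undirEdge a b := by
  cases x with
  | inl a =>
    cases y with
    | inl b => exact ⟨a, b, rfl, rfl, h⟩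
    | inr k => obtain ⟨-, h2, -⟩ := h; simp at h2
  | inr k =>
    cases y with
    | inl b => obtain ⟨-, -, h2⟩ := h; simp at h2
    | inr k' => exact h.elim

lemma gi_lift_dir {a b : Fin p} (h : Relation.ReflTransGen G.dirEdge a b) :
    Relation.ReflTransGen (interventionGraph G targets).dirEdge (Sum.inl a) (Sum.inl b) :=
  by
    induction h with
    | refl => exact .refl
    | tail _ hbc ih => exact ih.tail hbc

lemma aux_ant_arrow (hG : G.IsAncestral) {x j : Fin p}
    (harr : ∃ b m, G.edge b x m Mark.arrow)
    (h : (interventionGraph G targets).anteriorTo (Sum.inl x) (Sum.inl j)) :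
    Relation.ReflTransGen G.dirEdge x j := by
  obtain ⟨c, hu, hdc⟩ := h
  rcases Relation.ReflTransGen.cases_head hu with heq | ⟨y, h1, -⟩
  · obtain ⟨b, hb, hd⟩ := gi_rtg_dir_inl G targets (heq ▸ hdc) (a := x) rfl
    obtain rfl : j = b := Sum.inl.inj hb
    exact hd
  · obtain ⟨a', b', ha', -, hub⟩ := gi_undir G targets h1
    obtain rfl : x = a' := Sum.inl.inj ha'
    obtain ⟨b, m, hbm⟩ := harr
    exact absurd hbm (hG.2.2.2 x ⟨b', Or.inl hub⟩ b m)

end Stmt3Aux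

/-- Lemma: no additional intervention adjacencies. Let `G` be an
ancestral graph and `𝓘` a multiset of intervention targets not doubly-intervening on any
selection adjacent node of `G`. If `i ∈ W_𝓘` and `j ∈ [p]` are not adjacent in `G^𝓘`,
then they are not adjacent in the maximal extension of `G^𝓘`; in particular `i` is
m-separated from `j` given `(ant(j) ∪ W_𝓘) \ {i, j}` in `G^𝓘`. -/
theorem stmt3 {p : ℕ} {ι : Type} [Fintype ι] (G : MixedGraph (Fin p))
    (hG : G.IsAncestral) (targets : ι → Set (Fin p))
    (hd : ∀ i, G.selectionAdjacent i → ¬ doublyIntervenes targets i)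
    (K : MixedGraph (Fin p ⊕ InterventionIndex targets))
    (hK : MixedGraph.IsRGExtension (interventionGraph G targets) K)
    (κ : InterventionIndex targets) (j : Fin p)
    (hnadj : ¬ (interventionGraph G targets).adj (Sum.inr κ) (Sum.inl j)) :
    ¬ K.adj (Sum.inr κ) (Sum.inl j) ∧
      (interventionGraph G targets).mSep {Sum.inr κ} {Sum.inl j}
        (({w | (interventionGraph G targets).anteriorTo w (Sum.inl j)} ∪
            Set.range (Sum.inr : InterventionIndex targets → Fin p ⊕ InterventionIndex targets)) \
          {Sum.inr κ, Sum.inl j}) := by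
  have hsep : (interventionGraph G targets).mSep {Sum.inr κ} {Sum.inl j}
      (({w | (interventionGraph G targets).anteriorTo w (Sum.inl j)} ∪
          Set.range (Sum.inr : InterventionIndex targets → Fin p ⊕ InterventionIndex targets)) \
        {Sum.inr κ, Sum.inl j}) := by
    intro a ha b hb hcon
    have ha' : a = Sum.inr κ := ha
    have hb' : b = Sum.inl j := hb
    subst ha'; subst hb'
    obtain ⟨w, hpath, h0, hlen, hcolls, hnons⟩ := hcon
    -- length at least 2
    have hlen0 : w.len ≠ 0 := by
      intro h; rw [h, h0] at hlen; exact absurd hlen (by simp)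
    have hlen1 : w.len ≠ 1 := by
      intro h
      have e := w.isEdge 0 (by omega)
      have h1 : w.vtx 1 = Sum.inl j := by rw [← h]; exact hlen
      rw [h0] at e
      rw [show (0:ℕ) + 1 = 1 from rfl, h1] at e
      exact hnadj ⟨_, _, e⟩
    have hlen2 : 2 ≤ w.len := by omega
    -- all vertices at positions 1..len are inl
    have hInl : ∀ m, 1 ≤ m → m ≤ w.len → ∃ a, w.vtx m = Sum.inl a := by
      intro m hm1 hm2
      rcases eq_or_lt_of_le hm2 with heq | hlt
      · exact ⟨j, by rw [heq, hlen]⟩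
      rcases hv : w.vtx m with a | k
      · exact ⟨a, rfl⟩
      exfalso
      have e := w.isEdge (m - 1) (by omega)
      rw [show m - 1 + 1 = m from by omega, hv] at e
      have ht : w.mk₂ (m - 1) = Mark.tail := by
        rcases hv' : w.vtx (m - 1) with a' | k'
        · rw [hv'] at e; exact e.2.2
        · rw [hv'] at e; exact e.elim
      have hnc : ¬ w.colliderAt m := by
        rintro ⟨-, -, hA, -⟩; rw [ht] at hA; exact Mark.noConfusion hA
      refine hnons m (by omega) hnc ?_
      rw [hv]
      refine ⟨Or.inr ⟨k, rfl⟩, ?_⟩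
      rintro (hk | hk)
      · have : m = 0 := hpath m 0 (by omega) (by omega) (by rw [hv, h0]; exact hk)
        omega
      · exact absurd hk (by simp)
    -- colliders with a G-arrowhead into them are G-ancestors of j
    have hCollAnt : ∀ i a, w.colliderAt i → w.vtx i = Sum.inl a →
        (∃ x m, G.edge x a m Mark.arrow) → Relation.ReflTransGen G.dirEdge a j := by
      intro i a hci hva harr
      obtain ⟨c, hcC, hanc⟩ := hcolls i hci
      obtain ⟨hcS, -⟩ := hcC
      rw [hva] at hanc
      rcases hcS with hant | ⟨k, rfl⟩
      swap
      · exact absurd (gi_rtg_into_inr G targets hanc) (by simp)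
      rcases Relation.ReflTransGen.cases_tail hanc with heq | ⟨b, hab, hbc⟩
      · exact aux_ant_arrow G targets hG harr (heq ▸ hant)
      · obtain ⟨c', rfl⟩ : ∃ c', c = Sum.inl c' := by
          cases c with
          | inl c' => exact ⟨c', rfl⟩
          | inr k => exact absurd hbc (gi_no_dir_into_inr G targets)
        obtain ⟨b', rfl, hab'⟩ := gi_rtg_dir_inl G targets hab rfl
        have hbc' : G.dirEdge b' c' := hbc
        have hc'j := aux_ant_arrow G targets hG ⟨b', Mark.tail, hbc'⟩ hant
        exact (hab'.tail hbc').trans hc'j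
    -- rightward chase
    have hR : ∀ d i, w.len - i ≤ d → 1 ≤ i → i < w.len → w.mk₁ i = Mark.tail →
        (interventionGraph G targets).anteriorTo (w.vtx i) (Sum.inl j) ∧
        (w.mk₂ i = Mark.arrow →
          Relation.ReflTransGen (interventionGraph G targets).dirEdge (w.vtx i) (Sum.inl j)) := by
      intro d
      induction d with
      | zero => intro i h1 _ h3 _; exact absurd h1 (by omega)
      | succ d ih =>
        intro i hle h1 hlt htail
        have e := w.isEdge i hlt
        rw [htail] at e
        obtain ⟨a, hva⟩ := hInl i h1 (le_of_lt hlt)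
        rcases eq_or_lt_of_le (Nat.succ_le_of_lt hlt) with heq | hlt2
        · -- next vertex is j
          have hv1 : w.vtx (i + 1) = Sum.inl j := by rw [show i + 1 = w.len from heq]; exact hlen
          cases hm : w.mk₂ i with
          | arrow =>
            rw [hm, hv1] at e
            exact ⟨⟨w.vtx i, .refl, .single e⟩, fun _ => .single e⟩
          | tail =>
            rw [hm, hv1] at e
            exact ⟨⟨Sum.inl j, .single e, .refl⟩,
              fun h => Mark.noConfusion h⟩
        · -- next vertex is interior
          obtain ⟨b, hvb⟩ := hInl (i + 1) (by omega) (by omega)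
          obtain ⟨c, hvc⟩ := hInl (i + 2) (by omega) (by omega)
          have e2 := w.isEdge (i + 1) hlt2
          rw [show i + 1 + 1 = i + 2 from rfl, hvb, hvc] at e2
          cases hm : w.mk₂ i with
          | arrow =>
            rw [hm, hva, hvb] at e
            have eG : G.edge a b Mark.tail Mark.arrow := e
            have hdab : (interventionGraph G targets).dirEdge (Sum.inl a) (Sum.inl b) := eG
            cases hm1 : w.mk₁ (i + 1) with
            | arrow =>
              have hc : w.colliderAt (i + 1) :=
                ⟨by omega, hlt2, by rw [Nat.add_sub_cancel]; exact hm, hm1⟩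
              have hbj := hCollAnt (i + 1) b hc hvb ⟨a, Mark.tail, eG⟩
              have hQ : Relation.ReflTransGen (interventionGraph G targets).dirEdge
                  (w.vtx i) (Sum.inl j) := by
                rw [hva]
                exact Relation.ReflTransGen.head hdab (gi_lift_dir G targets hbj)
              exact ⟨⟨w.vtx i, .refl, hQ⟩, fun _ => hQ⟩
            | tail =>
              have IH := ih (i + 1) (by omega) (by omega) hlt2 hm1
              cases hm2 : w.mk₂ (i + 1) with
              | arrow =>
                have hQ1 := IH.2 hm2
                rw [hvb] at hQ1
                have hQ : Relation.ReflTransGen (interventionGraph G targets).dirEdge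
                    (w.vtx i) (Sum.inl j) := by
                  rw [hva]
                  exact Relation.ReflTransGen.head hdab hQ1
                exact ⟨⟨w.vtx i, .refl, hQ⟩, fun _ => hQ⟩
              | tail =>
                exfalso
                rw [hm1, hm2] at e2
                exact hG.2.2.2 b ⟨c, Or.inl e2⟩ a Mark.tail eG
          | tail =>
            rw [hm, hva, hvb] at e
            have eG : G.undirEdge a b := e
            cases hm1 : w.mk₁ (i + 1) with
            | arrow =>
              exfalso
              rw [hm1] at e2
              exact hG.2.2.2 b ⟨a, Or.inr eG⟩ c (w.mk₂ (i + 1)) (hG.1.1 b c _ _ e2)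
            | tail =>
              have IH := ih (i + 1) (by omega) (by omega) hlt2 hm1
              obtain ⟨cc, hu, hdd⟩ := IH.1
              have huab : (interventionGraph G targets).undirEdge (w.vtx i) (w.vtx (i + 1)) := by
                rw [hva, hvb]; exact eG
              exact ⟨⟨cc, Relation.ReflTransGen.head huab hu, hdd⟩,
                fun h => Mark.noConfusion h⟩
    -- leftward chase
    have hL : ∀ i, 1 ≤ i → i < w.len → w.mk₂ (i - 1) = Mark.tail →
        ∀ a, w.vtx i = Sum.inl a → (∃ x m, G.edge x a m Mark.arrow) →
        Relation.ReflTransGen G.dirEdge a j := by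
      intro i
      induction i with
      | zero => intro h; exact absurd h (by omega)
      | succ n ihn =>
        intro _ hlt htail a hva harr
        rw [Nat.add_sub_cancel] at htail
        have e := w.isEdge n (by omega)
        rw [show n + 1 = n + 1 from rfl] at e
        rcases hvn : w.vtx n with u | k
        swap
        · rw [hvn, hva] at e
          obtain ⟨-, -, h2⟩ := e
          rw [htail] at h2
          exact Mark.noConfusion h2
        rw [hvn, hva, htail] at e
        cases hm1 : w.mk₁ n with
        | tail =>
          rw [hm1] at e
          have eG : G.undirEdge u a := e
          obtain ⟨x, m, hx⟩ := harr
          exact absurd hx (hG.2.2.2 a ⟨u, Or.inr eG⟩ x m)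
        | arrow =>
          rw [hm1] at e
          have hdau : G.dirEdge a u := hG.1.1 u a _ _ e
          have hn1 : 1 ≤ n := by
            rcases Nat.eq_zero_or_pos n with rfl | h
            · rw [h0] at hvn; exact absurd hvn (by simp)
            · exact h
          have huj : Relation.ReflTransGen G.dirEdge u j := by
            cases hm2 : w.mk₂ (n - 1) with
            | arrow =>
              have hcn : w.colliderAt n := ⟨by omega, by omega, hm2, hm1⟩
              exact hCollAnt n u hcn hvn ⟨a, Mark.tail, hdau⟩
            | tail => exact ihn hn1 (by omega) hm2 u hvn ⟨a, Mark.tail, hdau⟩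
          exact Relation.ReflTransGen.head hdau huj
    -- main argument at position len - 1
    set n := w.len - 1 with hn
    have hn1 : n + 1 = w.len := by omega
    obtain ⟨v, hvv⟩ := hInl n (by omega) (by omega)
    have e := w.isEdge n (by omega)
    rw [hn1, hlen, hvv] at e
    have hvne : v ≠ j := by
      intro h
      have : n = w.len := hpath n w.len (by omega) le_rfl (by rw [hvv, hlen, h])
      omega
    by_cases hc : w.colliderAt n
    · have hm1 : w.mk₁ n = Mark.arrow := hc.2.2.2
      rw [hm1] at e
      have eG : G.edge v j Mark.arrow (w.mk₂ n) := e
      have harr : ∃ x m, G.edge x v m Mark.arrow := ⟨j, w.mk₂ n, hG.1.1 v j _ _ eG⟩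
      have hvj := hCollAnt n v hc hvv harr
      have htg : Relation.TransGen G.dirEdge v j := by
        rcases Relation.ReflTransGen.cases_head hvj with h | ⟨c, h1, h2⟩
        · exact absurd h hvne
        · exact Relation.TransGen.head' h1 h2
      cases hm2 : w.mk₂ n with
      | tail =>
        rw [hm2] at eG
        exact hG.2.1 j (Relation.TransGen.head (hG.1.1 v j _ _ eG) htg)
      | arrow =>
        rw [hm2] at eG
        exact (hG.2.2.1 v j eG).1 htg
    · refine hnons n (by omega) hc ?_
      have hant : (interventionGraph G targets).anteriorTo (w.vtx n) (Sum.inl j) := by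
        cases hm1 : w.mk₁ n with
        | tail => exact (hR w.len n (by omega) (by omega) (by omega) hm1).1
        | arrow =>
          have hm2 : w.mk₂ (n - 1) = Mark.tail := by
            cases hmm : w.mk₂ (n - 1) with
            | tail => rfl
            | arrow => exact absurd ⟨by omega, by omega, hmm, hm1⟩ hc
          rw [hm1] at e
          have eG : G.edge v j Mark.arrow (w.mk₂ n) := e
          have hvj := hL n (by omega) (by omega) hm2 v hvv
            ⟨j, w.mk₂ n, hG.1.1 v j _ _ eG⟩
          rw [hvv]
          exact ⟨Sum.inl v, .refl, gi_lift_dir G targets hvj⟩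
      refine ⟨Or.inl hant, ?_⟩
      rintro (h | h)
      · rw [hvv] at h; exact absurd h (by simp)
      · rw [hvv] at h; exact hvne (Sum.inl.inj h)
  refine ⟨?_, hsep⟩
  rintro ⟨m₁, m₂, he⟩
  obtain ⟨hsub, hrl, hme, hmax⟩ := hK
  have hdis : Disjoint ({Sum.inr κ} : Set (Fin p ⊕ InterventionIndex targets)) {Sum.inl j} := by
    simp
  have hKind := (hme _ _ _).mp ⟨hdis, hsep⟩
  refine hKind.2 (Sum.inr κ) rfl (Sum.inl j) rfl ?_
  refine ⟨⟨1, fun k => if k = 0 then Sum.inr κ else Sum.inl j, fun _ => m₁, fun _ => m₂,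
    ?_⟩, ?_, ?_, ?_, ?_, ?_⟩
  · intro i hi
    have hi' : i < 1 := hi
    have : i = 0 := by omega
    subst this
    simpa using he
  · intro i1 i2 h1 h2 heq
    have h1' : i1 ≤ 1 := h1
    have h2' : i2 ≤ 1 := h2
    have hc1 : i1 = 0 ∨ i1 = 1 := by omega
    have hc2 : i2 = 0 ∨ i2 = 1 := by omega
    rcases hc1 with rfl | rfl <;> rcases hc2 with rfl | rfl <;> simp_all
  · rfl
  · rfl
  · rintro i ⟨h1, h2, -⟩
    have h2' : i < 1 := h2
    exact absurd h1 (by omega)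
  · rintro i hi - ⟨-, hne⟩
    have hi' : i ≤ 1 := hi
    have : i = 0 ∨ i = 1 := by omega
    rcases this with rfl | rfl
    · exact hne (Or.inl rfl)
    · exact hne (Or.inr rfl)
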